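/- arXiv:2310.16055 — 2 statements merged into one kernel-verified Lean document; each statement's English description precedes it below -/
import Mathlib

section
/- Let f = (f_1,…,f_n) and g = (g_1,…,g_n) be nonnegative elements of (L¹(D_u))^n with ‖f‖₁ ≤ c and ‖g‖₁ ≤ c for some constant c > 0. Then, for every fixed time t ∈ [0,T], Σ_{i=1}^n ∫_{D_u} |f_i(u) Ω_i[f](t,u) − g_i(u) Ω_i[g](t,u)| du ≤ 2ηc ‖f − g‖₁ + 2Γc ‖f − g‖₁ + Θ ‖f − g‖₁. -/
open MeasureTheory

/-- The operator `Ω_i[f](t,u)`. -/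
noncomputable def omegaOp (n : ℕ) (D : Set ℝ)
    (η : Fin n → Fin n → ℝ → ℝ → ℝ)
    (Γ : Fin n → Fin n → ℝ → ℝ) (Θ : Fin n → ℝ → ℝ)
    (t : ℝ) (f : Fin n → ℝ → ℝ) (i : Fin n) (u : ℝ) : ℝ :=
  (∑ k : Fin n, ∫ ua in D, η i k u ua * f k ua) +
    ((∑ h ∈ Finset.univ.erase i, Γ i h t * ∫ ua in D, f h ua) + Θ i t)

/-- The `L¹` norm `‖f‖₁ = Σ_i ∫_{D} |f_i(u)| du`. -/
noncomputable def l1norm (n : ℕ) (D : Set ℝ) (f : Fin n → ℝ → ℝ) : ℝ :=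
  ∑ i : Fin n, ∫ u in D, |f i u|


private lemma abs_int_le {D : Set ℝ} (p : ℝ → ℝ) :
    |∫ u in D, p u| ≤ ∫ u in D, |p u| := by
  simpa [Real.norm_eq_abs] using
    norm_integral_le_integral_norm (μ := MeasureTheory.volume.restrict D) p

/-- Lipschitz-type estimate for `f ↦ f_i · Ω_i[f]`:
`Σ_i ∫ |f_i Ω_i[f] − g_i Ω_i[g]| ≤ 2ηc‖f−g‖₁ + 2Γc‖f−g‖₁ + Θ‖f−g‖₁`. -/
theorem omega_lipschitz
    (n : ℕ) (hn : 1 ≤ n) (D : Set ℝ) (hD : MeasurableSet D)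
    (hDb : Bornology.IsBounded D)
    (η : Fin n → Fin n → ℝ → ℝ → ℝ) (ηmax : ℝ) (hηpos : 0 < ηmax)
    (hηmeas : ∀ h k, Measurable (fun p : ℝ × ℝ => η h k p.1 p.2))
    (hηnn : ∀ h k us ua, 0 ≤ η h k us ua)
    (hηbd : ∀ h k us ua, η h k us ua ≤ ηmax)
    (T : ℝ) (hT : 0 < T)
    (Γ : Fin n → Fin n → ℝ → ℝ) (Θ : Fin n → ℝ → ℝ)
    (Γmax Θmax : ℝ) (hΓpos : 0 < Γmax) (hΘpos : 0 < Θmax)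
    (hΓC1 : ∀ i h, ContDiffOn ℝ 1 (Γ i h) (Set.Icc 0 T))
    (hΘC1 : ∀ i, ContDiffOn ℝ 1 (Θ i) (Set.Icc 0 T))
    (hΓbd : ∀ i h, ∀ t ∈ Set.Icc (0:ℝ) T, |Γ i h t| ≤ Γmax)
    (hΘbd : ∀ i, ∀ t ∈ Set.Icc (0:ℝ) T, |Θ i t| ≤ Θmax)
    (f g : Fin n → ℝ → ℝ)
    (hfint : ∀ i, IntegrableOn (f i) D) (hgint : ∀ i, IntegrableOn (g i) D)
    (hfnn : ∀ i u, 0 ≤ f i u) (hgnn : ∀ i u, 0 ≤ g i u)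
    (c : ℝ) (hc : 0 < c)
    (hfc : l1norm n D f ≤ c) (hgc : l1norm n D g ≤ c) :
    ∀ t ∈ Set.Icc (0:ℝ) T,
      (∑ i : Fin n, ∫ u in D,
          |f i u * omegaOp n D η Γ Θ t f i u - g i u * omegaOp n D η Γ Θ t g i u|) ≤
        2 * ηmax * c * l1norm n D (fun i u => f i u - g i u) +
          2 * Γmax * c * l1norm n D (fun i u => f i u - g i u) +
          Θmax * l1norm n D (fun i u => f i u - g i u) := by
  intro t ht
  set N := l1norm n D (fun i u => f i u - g i u) with hN
  have hNnn : 0 ≤ N := Finset.sum_nonneg fun i _ => integral_nonneg fun u => abs_nonneg _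
  have hsec : ∀ (i k : Fin n) (u : ℝ), Measurable (fun ua => η i k u ua) := fun i k u =>
    (hηmeas i k).comp (measurable_const.prodMk measurable_id)
  have hηI : ∀ (i k : Fin n) (u : ℝ) (p : ℝ → ℝ), IntegrableOn p D →
      IntegrableOn (fun ua => η i k u ua * p ua) D := fun i k u p hp =>
    hp.bdd_mul (hsec i k u).aestronglyMeasurable
      (c := ηmax) (Filter.Eventually.of_forall fun x => by
        rw [Real.norm_eq_abs, abs_of_nonneg (hηnn i k u x)]; exact hηbd i k u x)
  have hηB : ∀ (i k : Fin n) (u : ℝ) (p : ℝ → ℝ), IntegrableOn p D →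
      |∫ ua in D, η i k u ua * p ua| ≤ ηmax * ∫ ua in D, |p ua| := by
    intro i k u p hp
    calc |∫ ua in D, η i k u ua * p ua| ≤ ∫ ua in D, |η i k u ua * p ua| := abs_int_le _
      _ ≤ ∫ ua in D, ηmax * |p ua| := by
          refine integral_mono_of_nonneg (Filter.Eventually.of_forall fun ua => abs_nonneg _)
            (hp.abs.const_mul ηmax) (Filter.Eventually.of_forall fun ua => ?_)
          dsimp only
          rw [abs_mul, abs_of_nonneg (hηnn i k u ua)]
          exact mul_le_mul_of_nonneg_right (hηbd i k u ua) (abs_nonneg _)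
      _ = ηmax * ∫ ua in D, |p ua| := integral_const_mul _ _
  have homB : ∀ (p : Fin n → ℝ → ℝ), (∀ i, IntegrableOn (p i) D) →
      ∀ (i : Fin n) (u : ℝ), |omegaOp n D η Γ Θ t p i u| ≤
        ηmax * l1norm n D p + Γmax * l1norm n D p + Θmax := by
    intro p hp i u
    have h1 : |∑ k : Fin n, ∫ ua in D, η i k u ua * p k ua| ≤ ηmax * l1norm n D p := by
      calc |∑ k : Fin n, ∫ ua in D, η i k u ua * p k ua|
          ≤ ∑ k : Fin n, |∫ ua in D, η i k u ua * p k ua| := Finset.abs_sum_le_sum_abs _ _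
        _ ≤ ∑ k : Fin n, ηmax * ∫ ua in D, |p k ua| :=
            Finset.sum_le_sum fun k _ => hηB i k u (p k) (hp k)
        _ = ηmax * l1norm n D p := by rw [l1norm, Finset.mul_sum]
    have h2 : |∑ h ∈ Finset.univ.erase i, Γ i h t * ∫ ua in D, p h ua| ≤
        Γmax * l1norm n D p := by
      calc |∑ h ∈ Finset.univ.erase i, Γ i h t * ∫ ua in D, p h ua|
          ≤ ∑ h ∈ Finset.univ.erase i, |Γ i h t * ∫ ua in D, p h ua| :=
            Finset.abs_sum_le_sum_abs _ _
        _ ≤ ∑ h ∈ Finset.univ.erase i, Γmax * ∫ ua in D, |p h ua| := by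
            refine Finset.sum_le_sum fun h _ => ?_
            rw [abs_mul]
            exact mul_le_mul (hΓbd i h t ht) (abs_int_le _) (abs_nonneg _) hΓpos.le
        _ ≤ ∑ h : Fin n, Γmax * ∫ ua in D, |p h ua| :=
            Finset.sum_le_sum_of_subset_of_nonneg (Finset.subset_univ _)
              (fun h _ _ => mul_nonneg hΓpos.le (integral_nonneg fun _ => abs_nonneg _))
        _ = Γmax * l1norm n D p := by rw [l1norm, Finset.mul_sum]
    have h3 : |Θ i t| ≤ Θmax := hΘbd i t ht
    have e1 := abs_add_le (∑ k : Fin n, ∫ ua in D, η i k u ua * p k ua)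
      ((∑ h ∈ Finset.univ.erase i, Γ i h t * ∫ ua in D, p h ua) + Θ i t)
    have e2 := abs_add_le (∑ h ∈ Finset.univ.erase i, Γ i h t * ∫ ua in D, p h ua) (Θ i t)
    rw [omegaOp]
    linarith
  have hdiffeq : ∀ (i : Fin n) (u : ℝ), omegaOp n D η Γ Θ t f i u - omegaOp n D η Γ Θ t g i u =
      (∑ k : Fin n, ∫ ua in D, η i k u ua * (f k ua - g k ua)) +
      ∑ h ∈ Finset.univ.erase i, Γ i h t * ∫ ua in D, (f h ua - g h ua) := by
    intro i u
    have e1 : ∀ k : Fin n, (∫ ua in D, η i k u ua * (f k ua - g k ua)) =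
        (∫ ua in D, η i k u ua * f k ua) - ∫ ua in D, η i k u ua * g k ua := by
      intro k
      rw [← integral_sub (hηI i k u (f k) (hfint k)) (hηI i k u (g k) (hgint k))]
      congr 1; funext ua; ring
    have e2 : ∀ h : Fin n, (∫ ua in D, (f h ua - g h ua)) =
        (∫ ua in D, f h ua) - ∫ ua in D, g h ua := fun h => integral_sub (hfint h) (hgint h)
    simp only [omegaOp, e1, e2]
    simp only [mul_sub]
    rw [Finset.sum_sub_distrib, Finset.sum_sub_distrib]
    ring
  have hdiffB : ∀ (i : Fin n) (u : ℝ),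
      |omegaOp n D η Γ Θ t f i u - omegaOp n D η Γ Θ t g i u| ≤ ηmax * N + Γmax * N := by
    intro i u
    rw [hdiffeq i u]
    have h1 : |∑ k : Fin n, ∫ ua in D, η i k u ua * (f k ua - g k ua)| ≤ ηmax * N := by
      calc |∑ k : Fin n, ∫ ua in D, η i k u ua * (f k ua - g k ua)|
          ≤ ∑ k : Fin n, |∫ ua in D, η i k u ua * (f k ua - g k ua)| :=
            Finset.abs_sum_le_sum_abs _ _
        _ ≤ ∑ k : Fin n, ηmax * ∫ ua in D, |f k ua - g k ua| :=
            Finset.sum_le_sum fun k _ => hηB i k u _ ((hfint k).sub (hgint k))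
        _ = ηmax * N := by rw [hN, l1norm, Finset.mul_sum]
    have h2 : |∑ h ∈ Finset.univ.erase i, Γ i h t * ∫ ua in D, (f h ua - g h ua)| ≤
        Γmax * N := by
      calc |∑ h ∈ Finset.univ.erase i, Γ i h t * ∫ ua in D, (f h ua - g h ua)|
          ≤ ∑ h ∈ Finset.univ.erase i, |Γ i h t * ∫ ua in D, (f h ua - g h ua)| :=
            Finset.abs_sum_le_sum_abs _ _
        _ ≤ ∑ h ∈ Finset.univ.erase i, Γmax * ∫ ua in D, |f h ua - g h ua| := by
            refine Finset.sum_le_sum fun h _ => ?_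
            rw [abs_mul]
            exact mul_le_mul (hΓbd i h t ht) (abs_int_le _) (abs_nonneg _) hΓpos.le
        _ ≤ ∑ h : Fin n, Γmax * ∫ ua in D, |f h ua - g h ua| :=
            Finset.sum_le_sum_of_subset_of_nonneg (Finset.subset_univ _)
              (fun h _ _ => mul_nonneg hΓpos.le (integral_nonneg fun _ => abs_nonneg _))
        _ = Γmax * N := by rw [hN, l1norm, Finset.mul_sum]
    exact (abs_add_le _ _).trans (add_le_add h1 h2)
  set M1 := ηmax * c + Γmax * c + Θmax with hM1
  set M2 := ηmax * N + Γmax * N with hM2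
  have hM2nn : 0 ≤ M2 :=
    add_nonneg (mul_nonneg hηpos.le hNnn) (mul_nonneg hΓpos.le hNnn)
  have hfB : ∀ (i : Fin n) (u : ℝ), |omegaOp n D η Γ Θ t f i u| ≤ M1 := by
    intro i u
    refine (homB f hfint i u).trans ?_
    rw [hM1]
    nlinarith [hfc, hηpos.le, hΓpos.le]
  have hpt : ∀ (i : Fin n) (u : ℝ),
      |f i u * omegaOp n D η Γ Θ t f i u - g i u * omegaOp n D η Γ Θ t g i u| ≤
        M1 * |f i u - g i u| + M2 * |g i u| := by
    intro i u
    have key : f i u * omegaOp n D η Γ Θ t f i u - g i u * omegaOp n D η Γ Θ t g i u =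
        (f i u - g i u) * omegaOp n D η Γ Θ t f i u +
        g i u * (omegaOp n D η Γ Θ t f i u - omegaOp n D η Γ Θ t g i u) := by ring
    calc |f i u * omegaOp n D η Γ Θ t f i u - g i u * omegaOp n D η Γ Θ t g i u|
        ≤ |(f i u - g i u) * omegaOp n D η Γ Θ t f i u| +
          |g i u * (omegaOp n D η Γ Θ t f i u - omegaOp n D η Γ Θ t g i u)| := by
          rw [key]; exact abs_add_le _ _
      _ = |f i u - g i u| * |omegaOp n D η Γ Θ t f i u| +
          |g i u| * |omegaOp n D η Γ Θ t f i u - omegaOp n D η Γ Θ t g i u| := by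
          rw [abs_mul, abs_mul]
      _ ≤ |f i u - g i u| * M1 + |g i u| * M2 :=
          add_le_add (mul_le_mul_of_nonneg_left (hfB i u) (abs_nonneg _))
            (mul_le_mul_of_nonneg_left (hdiffB i u) (abs_nonneg _))
      _ = M1 * |f i u - g i u| + M2 * |g i u| := by ring
  have hint : ∀ i : Fin n,
      (∫ u in D, |f i u * omegaOp n D η Γ Θ t f i u - g i u * omegaOp n D η Γ Θ t g i u|) ≤
        M1 * (∫ u in D, |f i u - g i u|) + M2 * ∫ u in D, |g i u| := by
    intro i
    have ha : IntegrableOn (fun u => M1 * |f i u - g i u|) D :=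
      ((hfint i).sub (hgint i)).abs.const_mul M1
    have hb : IntegrableOn (fun u => M2 * |g i u|) D := (hgint i).abs.const_mul M2
    calc (∫ u in D, |f i u * omegaOp n D η Γ Θ t f i u - g i u * omegaOp n D η Γ Θ t g i u|)
        ≤ ∫ u in D, (M1 * |f i u - g i u| + M2 * |g i u|) :=
          integral_mono_of_nonneg (Filter.Eventually.of_forall fun u => abs_nonneg _)
            (ha.add hb) (Filter.Eventually.of_forall fun u => hpt i u)
      _ = M1 * (∫ u in D, |f i u - g i u|) + M2 * ∫ u in D, |g i u| := by
          rw [integral_add ha hb, integral_const_mul, integral_const_mul]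
  calc (∑ i : Fin n, ∫ u in D,
        |f i u * omegaOp n D η Γ Θ t f i u - g i u * omegaOp n D η Γ Θ t g i u|)
      ≤ ∑ i : Fin n, (M1 * (∫ u in D, |f i u - g i u|) + M2 * ∫ u in D, |g i u|) :=
        Finset.sum_le_sum fun i _ => hint i
    _ = M1 * N + M2 * l1norm n D g := by
        rw [Finset.sum_add_distrib, ← Finset.mul_sum, ← Finset.mul_sum, hN, l1norm, l1norm]
    _ ≤ M1 * N + M2 * c := add_le_add le_rfl (mul_le_mul_of_nonneg_left hgc hM2nn)
    _ = 2 * ηmax * c * N + 2 * Γmax * c * N + Θmax * N := by rw [hM1, hM2]; ring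
end

section
/- (Theorem 2, instability of E₂, eigenvalue form.) The Jacobian matrix of the macroscopic vector field at the equilibrium E₂ = (0, d_M/η23, τ_N/η23, 0) is the 4×4 matrix with rows (σ13 τ_N/η23, 0, 0, 0), (−d_M η12/η23, 0, −d_M, 0), (d_M η12/η23, τ_N, 0, 0), (0, 0, 0, −d_T), its characteristic polynomial in the variable λ factors as P₂(λ) = (−d_T − λ)(σ13 τ_N/η23 − λ)(λ² + τ_N d_M), and hence it has the strictly positive real eigenvalue σ13 τ_N/η23 > 0. -/
open Polynomial

/-- Jacobian matrix of the macroscopic autoimmune vector field at a point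
`(A, N, M, T)`. -/
def macroJacobian (σ13 σ14 η12 η23 τN dM σ41 dT : ℝ)
    (A N M T : ℝ) : Matrix (Fin 4) (Fin 4) ℝ :=
  !![σ13 * M - σ14 * T, 0, σ13 * A, -σ14 * A;
     -η12 * N, -η12 * A - η23 * M + τN, -η23 * N, 0;
     η12 * N, η12 * A + η23 * M, η23 * N - dM, 0;
     σ41 * T, 0, 0, -dT + σ41 * A]

/-- Theorem 2 (instability of `E₂`, eigenvalue form): the Jacobian at
`E₂ = (0, d_M/η23, τ_N/η23, 0)` is the displayed matrix, its characteristic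
polynomial factors as `P₂(λ) = (−d_T − λ)(σ13 τ_N/η23 − λ)(λ² + τ_N d_M)`, and it
has the strictly positive real eigenvalue `σ13 τ_N/η23 > 0`. -/
theorem jacobian_E2_charpoly_and_positive_eigenvalue
    (σ13 σ14 η12 η23 τN dM σ41 dT : ℝ)
    (hσ13 : 0 < σ13) (hσ14 : 0 < σ14) (hη12 : 0 < η12) (hη23 : 0 < η23)
    (hτN : 0 < τN) (hdM : 0 < dM) (hσ41 : 0 < σ41) (hdT : 0 < dT) :
    macroJacobian σ13 σ14 η12 η23 τN dM σ41 dT 0 (dM / η23) (τN / η23) 0 =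
      !![σ13 * τN / η23, 0, 0, 0;
         -(dM * η12 / η23), 0, -dM, 0;
         dM * η12 / η23, τN, 0, 0;
         0, 0, 0, -dT] ∧
    (∀ lam : ℝ,
      (macroJacobian σ13 σ14 η12 η23 τN dM σ41 dT 0 (dM / η23) (τN / η23) 0).charpoly.eval lam =
        (-dT - lam) * (σ13 * τN / η23 - lam) * (lam ^ 2 + τN * dM)) ∧
    0 < σ13 * τN / η23 ∧
    ∃ v : Fin 4 → ℝ, v ≠ 0 ∧
      (macroJacobian σ13 σ14 η12 η23 τN dM σ41 dT 0 (dM / η23) (τN / η23) 0).mulVec v =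
        (σ13 * τN / η23) • v := by
  have hη23' : η23 ≠ 0 := ne_of_gt hη23
  have hJ : macroJacobian σ13 σ14 η12 η23 τN dM σ41 dT 0 (dM / η23) (τN / η23) 0 =
      !![σ13 * τN / η23, 0, 0, 0;
         -(dM * η12 / η23), 0, -dM, 0;
         dM * η12 / η23, τN, 0, 0;
         0, 0, 0, -dT] := by
    unfold macroJacobian
    ext i j
    fin_cases i <;> fin_cases j <;>
      simp [Matrix.vecHead, Matrix.vecTail] <;> field_simp <;> ring
  refine ⟨hJ, ?_, by positivity, ?_⟩
  · intro lam
    rw [hJ, Matrix.charpoly, ← coe_evalRingHom, RingHom.map_det, RingHom.mapMatrix_apply]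
    have : ((Matrix.charmatrix (!![σ13 * τN / η23, 0, 0, 0;
         -(dM * η12 / η23), 0, -dM, 0;
         dM * η12 / η23, τN, 0, 0;
         0, 0, 0, -dT])).map (evalRingHom lam)) =
      !![lam - σ13 * τN / η23, 0, 0, 0;
         dM * η12 / η23, lam, dM, 0;
         -(dM * η12 / η23), -τN, lam, 0;
         0, 0, 0, lam + dT] := by
      ext i j
      fin_cases i <;> fin_cases j <;>
        simp [Matrix.charmatrix_apply, Matrix.map_apply, Matrix.vecHead, Matrix.vecTail] <;> ring
    rw [this]
    simp [Matrix.det_succ_row_zero, Fin.sum_univ_succ, Matrix.vecHead, Matrix.vecTail]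
    ring
  · set μ := σ13 * τN / η23 with hμ
    have hμpos : 0 < μ := by positivity
    have hD : 0 < μ ^ 2 + dM * τN := by positivity
    set c := dM * η12 / η23 with hc
    set v1 : ℝ := -c * (μ + dM) / (μ ^ 2 + dM * τN) with hv1
    set v2 : ℝ := (c + τN * v1) / μ with hv2
    refine ⟨![1, v1, v2, 0], ?_, ?_⟩
    · intro h
      have := congrFun h 0
      simp at this
    · rw [hJ]
      ext i
      fin_cases i <;>
        simp [Matrix.mulVec, dotProduct, Fin.sum_univ_four]
      · -- row 1: -c*1 + 0*v1 + (-dM)*v2 = μ*v1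
        rw [hv2, hv1]
        field_simp
        ring
      · -- row 2: c + τN*v1 = μ*v2
        rw [hv2]
        field_simp
end
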